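/- Let Ψ : ℝ → ℝ be a nonnegative convex function vanishing only at 0 and integrable against e^{-λΨ}. Then the map R : (0,∞) → (0,∞), R(λ) = (∫ Ψ e^{-λΨ}) / (∫ e^{-λΨ}), is surjective onto (0,∞). -/

import Mathlib

open MeasureTheory Real Filter Set

lemma aux_x_exp (x : ℝ) : x * Real.exp (-x) ≤ 1 := by
  have h1 := Real.add_one_le_exp x
  have h2 := Real.exp_pos x
  rw [Real.exp_neg]
  rw [mul_inv_le_iff₀ h2]
  linarith


section
variable {Ψ : ℝ → ℝ} (hconv : ConvexOn ℝ Set.univ Ψ)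
  (hnonneg : ∀ x, 0 ≤ Ψ x) (hzero : ∀ x, Ψ x = 0 ↔ x = 0)
  (hint : ∀ l : ℝ, 0 < l → Integrable (fun t => Real.exp (-l * Ψ t)))

include hconv in
lemma orlicz_cont : Continuous Ψ :=
  continuousOn_univ.1 (hconv.continuousOn isOpen_univ)

include hconv hnonneg hzero in
lemma orlicz_mono : ∀ x y : ℝ, 0 ≤ x → x ≤ y → Ψ x ≤ Ψ y := by
  intro x y hx hxy
  rcases eq_or_lt_of_le (hx.trans hxy) with h | hy
  · have hx0 : x = 0 := le_antisymm (hxy.trans h.symm.le) hx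
    subst hx0; rw [← h]
  · have h1 : x = (x/y) • y + (1 - x/y) • (0:ℝ) := by
      rw [smul_eq_mul, smul_eq_mul, mul_zero, add_zero, div_mul_cancel₀ _ hy.ne']
    have ha : 0 ≤ x/y := div_nonneg hx hy.le
    have hb : 0 ≤ 1 - x/y := by
      have := (div_le_one hy).2 hxy; linarith
    calc Ψ x = Ψ ((x/y) • y + (1 - x/y) • (0:ℝ)) := by rw [← h1]
    _ ≤ (x/y) * Ψ y + (1 - x/y) * Ψ 0 :=
        hconv.2 (mem_univ y) (mem_univ 0) ha hb (by ring)
    _ = (x/y) * Ψ y := by rw [(hzero 0).2 rfl]; ring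
    _ ≤ 1 * Ψ y := by
        apply mul_le_mul_of_nonneg_right _ (hnonneg y)
        exact (div_le_one hy).2 hxy
    _ = Ψ y := one_mul _

include hconv hnonneg hzero in
lemma orlicz_anti : ∀ x y : ℝ, y ≤ x → x ≤ 0 → Ψ x ≤ Ψ y := by
  intro x y hyx hx
  rcases eq_or_lt_of_le (hyx.trans hx) with h | hy
  · have hx0 : x = 0 := le_antisymm hx (h.symm.le.trans hyx)
    rw [hx0, (hzero 0).2 rfl]; exact hnonneg _
  · have h1 : x = (x/y) • y + (1 - x/y) • (0:ℝ) := by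
      rw [smul_eq_mul, smul_eq_mul, mul_zero, add_zero, div_mul_cancel₀ _ hy.ne]
    have ha : 0 ≤ x/y := div_nonneg_of_nonpos hx hy.le
    have hb : 0 ≤ 1 - x/y := by
      have := (div_le_one_of_neg hy).2 hyx; linarith
    calc Ψ x = Ψ ((x/y) • y + (1 - x/y) • (0:ℝ)) := by rw [← h1]
    _ ≤ (x/y) * Ψ y + (1 - x/y) * Ψ 0 :=
        hconv.2 (mem_univ y) (mem_univ 0) ha hb (by ring)
    _ = (x/y) * Ψ y := by rw [(hzero 0).2 rfl]; ring
    _ ≤ 1 * Ψ y := by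
        apply mul_le_mul_of_nonneg_right _ (hnonneg y)
        exact (div_le_one_of_neg hy).2 hyx
    _ = Ψ y := one_mul _

include hconv hzero in
lemma orlicz_growth_pos : ∀ t : ℝ, 1 ≤ t → Ψ 1 * t ≤ Ψ t := by
  intro t ht
  have ht0 : 0 < t := lt_of_lt_of_le one_pos ht
  have h1 : (1:ℝ) = (1/t) • t + (1 - 1/t) • (0:ℝ) := by
    rw [smul_eq_mul, smul_eq_mul, mul_zero, add_zero, one_div, inv_mul_cancel₀ ht0.ne']
  have key : Ψ 1 ≤ (1/t) * Ψ t := by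
    calc Ψ 1 = Ψ ((1/t) • t + (1 - 1/t) • (0:ℝ)) := by rw [← h1]
    _ ≤ (1/t) * Ψ t + (1 - 1/t) * Ψ 0 :=
        hconv.2 (mem_univ t) (mem_univ 0) (by positivity)
          (by rw [sub_nonneg]; exact div_le_one_of_le₀ ht ht0.le) (by ring)
    _ = (1/t) * Ψ t := by rw [(hzero 0).2 rfl]; ring
  have h2 := mul_le_mul_of_nonneg_right key ht0.le
  calc Ψ 1 * t ≤ (1/t) * Ψ t * t := h2
  _ = Ψ t := by field_simp

include hconv hzero in
lemma orlicz_growth_neg : ∀ t : ℝ, t ≤ -1 → Ψ (-1) * (-t) ≤ Ψ t := by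
  intro t ht
  have ht0 : t < 0 := lt_of_le_of_lt ht (by norm_num)
  have h1 : (-1:ℝ) = (-1/t) • t + (1 - -1/t) • (0:ℝ) := by
    rw [smul_eq_mul, smul_eq_mul, mul_zero, add_zero, div_mul_cancel₀ _ ht0.ne]
  have key : Ψ (-1) ≤ (-1/t) * Ψ t := by
    calc Ψ (-1) = Ψ ((-1/t) • t + (1 - -1/t) • (0:ℝ)) := by rw [← h1]
    _ ≤ (-1/t) * Ψ t + (1 - -1/t) * Ψ 0 :=
        hconv.2 (mem_univ t) (mem_univ 0)
          (div_nonneg_of_nonpos (by norm_num) ht0.le)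
          (by
            rw [sub_nonneg, neg_div, neg_le]
            have : -(1:ℝ) / t ≤ 1 := (div_le_one_of_neg ht0).2 (by linarith)
            rw [neg_div] at this; linarith) (by ring)
    _ = (-1/t) * Ψ t := by rw [(hzero 0).2 rfl]; ring
  have h2 := mul_le_mul_of_nonneg_right key (neg_nonneg.2 ht0.le)
  calc Ψ (-1) * (-t) ≤ (-1/t) * Ψ t * (-t) := h2
  _ = Ψ t := by
      have : t ≠ 0 := ht0.ne
      field_simp
include hconv in
lemma orlicz_meas : Measurable Ψ := (orlicz_cont hconv).measurable

include hconv hnonneg hint in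
lemma orlicz_G_int : ∀ l : ℝ, 0 < l →
    Integrable (fun t => Ψ t * Real.exp (-l * Ψ t)) := by
  intro l hl
  have hmeas : Measurable Ψ := orlicz_meas hconv
  have hg : Integrable (fun t => (2/l) * Real.exp (-(l/2) * Ψ t)) :=
    (hint (l/2) (by positivity)).const_mul _
  refine hg.mono ?_ ?_
  · exact (hmeas.mul ((hmeas.const_mul _).exp)).aestronglyMeasurable
  · refine Eventually.of_forall fun t => ?_
    have hΨ := hnonneg t
    have key : Ψ t * Real.exp (-l * Ψ t) ≤ (2/l) * Real.exp (-(l/2) * Ψ t) := by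
      have e1 : Real.exp (-l * Ψ t)
          = Real.exp (-(l/2) * Ψ t) * Real.exp (-(l/2) * Ψ t) := by
        rw [← Real.exp_add]; ring_nf
      have e2 : (l/2 * Ψ t) * Real.exp (-(l/2 * Ψ t)) ≤ 1 := aux_x_exp _
      have e3 : Ψ t * Real.exp (-(l/2) * Ψ t) ≤ 2/l := by
        rw [neg_mul]
        have hl' : 0 < l/2 := by positivity
        calc Ψ t * Real.exp (-(l/2 * Ψ t))
            = (2/l) * ((l/2 * Ψ t) * Real.exp (-(l/2 * Ψ t))) := by
              field_simp
        _ ≤ (2/l) * 1 := by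
              apply mul_le_mul_of_nonneg_left e2 (by positivity)
        _ = 2/l := mul_one _
      calc Ψ t * Real.exp (-l * Ψ t)
          = (Ψ t * Real.exp (-(l/2) * Ψ t)) * Real.exp (-(l/2) * Ψ t) := by
            rw [e1]; ring
      _ ≤ (2/l) * Real.exp (-(l/2) * Ψ t) :=
            mul_le_mul_of_nonneg_right e3 (Real.exp_pos _).le
    have h0 : 0 ≤ Ψ t * Real.exp (-l * Ψ t) := by positivity
    rw [Real.norm_eq_abs, Real.norm_eq_abs, abs_of_nonneg h0,
      abs_of_nonneg (by positivity : (0:ℝ) ≤ (2/l) * Real.exp (-(l/2) * Ψ t))]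
    exact key

include hconv hnonneg hzero in
lemma orlicz_sublevel (M : ℝ) : volume {t : ℝ | Ψ t < M} < ⊤ := by
  have h1 : 0 < Ψ 1 := lt_of_le_of_ne (hnonneg 1) fun h =>
    one_ne_zero ((hzero 1).1 h.symm)
  have h2 : 0 < Ψ (-1) := lt_of_le_of_ne (hnonneg (-1)) fun h => by
    have := (hzero (-1)).1 h.symm; norm_num at this
  set B : ℝ := max 1 (M / Ψ 1) with hB
  set B' : ℝ := max 1 (M / Ψ (-1)) with hB'
  have hsub : {t : ℝ | Ψ t < M} ⊆ Set.Icc (-(B'+1)) (B+1) := by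
    intro t ht
    simp only [mem_setOf_eq] at ht
    constructor
    · by_contra hc
      push_neg at hc
      have ht1 : t ≤ -1 := by
        have : (1:ℝ) ≤ B' := le_max_left _ _
        linarith
      have := orlicz_growth_neg hconv hzero t ht1
      have hM : M / Ψ (-1) ≤ B' := le_max_right _ _
      have : M < Ψ (-1) * (-t) := by
        have h3 : M / Ψ (-1) < -t := by linarith
        calc M = Ψ (-1) * (M / Ψ (-1)) := by field_simp
        _ < Ψ (-1) * (-t) := by exact mul_lt_mul_of_pos_left h3 h2
      linarith [orlicz_growth_neg hconv hzero t ht1]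
    · by_contra hc
      push_neg at hc
      have ht1 : 1 ≤ t := by
        have : (1:ℝ) ≤ B := le_max_left _ _
        linarith
      have hM : M / Ψ 1 ≤ B := le_max_right _ _
      have : M < Ψ 1 * t := by
        have h3 : M / Ψ 1 < t := by linarith
        calc M = Ψ 1 * (M / Ψ 1) := by field_simp
        _ < Ψ 1 * t := mul_lt_mul_of_pos_left h3 h1
      linarith [orlicz_growth_pos hconv hzero t ht1]
  calc volume {t : ℝ | Ψ t < M} ≤ volume (Set.Icc (-(B'+1)) (B+1)) :=
        measure_mono hsub
  _ < ⊤ := by rw [Real.volume_Icc]; exact ENNReal.ofReal_lt_top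

include hint in
lemma orlicz_F_pos (l : ℝ) (hl : 0 < l) :
    0 < ∫ t, Real.exp (-l * Ψ t) := by
  rw [integral_pos_iff_support_of_nonneg
    (fun t => (Real.exp_pos _).le) (hint l hl)]
  have : Function.support (fun t => Real.exp (-l * Ψ t)) = univ := by
    ext t; simp [Function.mem_support, (Real.exp_pos _).ne']
  rw [this, Real.volume_univ]
  exact ENNReal.zero_lt_top

include hconv hnonneg hzero hint in
lemma orlicz_G_pos (l : ℝ) (hl : 0 < l) :
    0 < ∫ t, Ψ t * Real.exp (-l * Ψ t) := by
  rw [integral_pos_iff_support_of_nonneg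
    (fun t => mul_nonneg (hnonneg t) (Real.exp_pos _).le) (orlicz_G_int hconv hnonneg hint l hl)]
  have hsub : Set.Ioi (0:ℝ) ⊆ Function.support fun t => Ψ t * Real.exp (-l * Ψ t) := by
    intro t ht
    simp only [Function.mem_support]
    have : Ψ t ≠ 0 := fun h => (ne_of_gt ht) ((hzero t).1 h)
    positivity
  calc (0:ENNReal) < volume (Set.Ioi (0:ℝ)) := by simp [Real.volume_Ioi]
  _ ≤ _ := measure_mono hsub

include hconv hnonneg hzero hint in
lemma orlicz_F_low (l : ℝ) (hl : 0 < l) (N : ℝ) (hN : 0 ≤ N) :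
    N * Real.exp (-l * Ψ N) ≤ ∫ t, Real.exp (-l * Ψ t) := by
  have hmeas : Measurable Ψ := orlicz_meas hconv
  have key : ∀ t ∈ Set.Icc (0:ℝ) N,
      Real.exp (-l * Ψ N) ≤ Real.exp (-l * Ψ t) := by
    intro t ht
    apply Real.exp_le_exp.2
    have := orlicz_mono hconv hnonneg hzero t N ht.1 ht.2
    nlinarith
  calc N * Real.exp (-l * Ψ N)
      = ∫ t in Set.Icc (0:ℝ) N, Real.exp (-l * Ψ N) := by
        rw [setIntegral_const, measureReal_def, Real.volume_Icc, smul_eq_mul,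
          ENNReal.toReal_ofReal (by linarith)]
        ring_nf
  _ ≤ ∫ t in Set.Icc (0:ℝ) N, Real.exp (-l * Ψ t) := by
        apply setIntegral_mono_on
        · exact integrableOn_const (by rw [Real.volume_Icc]; exact ENNReal.ofReal_ne_top)
        · exact (hint l hl).integrableOn
        · exact measurableSet_Icc
        · exact key
  _ ≤ ∫ t, Real.exp (-l * Ψ t) :=
        setIntegral_le_integral (hint l hl)
          (Eventually.of_forall fun t => (Real.exp_pos _).le)
include hconv hnonneg hzero hint in
lemma orlicz_big (m : ℝ) (hm : 0 < m) : ∃ a : ℝ, 0 < a ∧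
    m ≤ (∫ t, Ψ t * Real.exp (-a * Ψ t)) / (∫ t, Real.exp (-a * Ψ t)) := by
  have hmeas : Measurable Ψ := orlicz_meas hconv
  set M : ℝ := m + 1 with hM
  set s : Set ℝ := {t | Ψ t < M} with hs
  have hsm : MeasurableSet s := hmeas measurableSet_Iio
  have hsfin : volume s < ⊤ := orlicz_sublevel hconv hnonneg hzero (Ψ := Ψ) M
  set C : ℝ := (volume s).toReal with hC
  have hC0 : 0 ≤ C := ENNReal.toReal_nonneg
  set N : ℝ := max 2 (M * C + 1) with hN
  have hN2 : (2:ℝ) ≤ N := le_max_left _ _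
  have hN1 : (1:ℝ) < N := by linarith
  have hNMC : M * C + 1 ≤ N := le_max_right _ _
  have hΨN : 0 < Ψ N := lt_of_le_of_ne (hnonneg N) fun h => by
    have := (hzero N).1 h.symm; rw [this] at hN2; norm_num at hN2
  set a : ℝ := Real.log (N / (N - 1)) / Ψ N with ha
  have hNN : 1 < N / (N - 1) ∨ True := Or.inr trivial
  have hlogpos : 0 < Real.log (N / (N - 1)) := by
    apply Real.log_pos
    rw [lt_div_iff₀ (by linarith : (0:ℝ) < N - 1)]
    linarith
  have hapos : 0 < a := div_pos hlogpos hΨN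
  refine ⟨a, hapos, ?_⟩
  set F : ℝ := ∫ t, Real.exp (-a * Ψ t) with hF
  set G : ℝ := ∫ t, Ψ t * Real.exp (-a * Ψ t) with hG
  have hFpos : 0 < F := orlicz_F_pos hint a hapos
  -- lower bound on F
  have hexp : Real.exp (-a * Ψ N) = (N - 1) / N := by
    rw [ha]
    rw [neg_mul, div_mul_cancel₀ _ hΨN.ne', Real.exp_neg,
      Real.exp_log (div_pos (by linarith) (by linarith)), inv_div]
  have hFlow : N - 1 ≤ F := by
    have := orlicz_F_low hconv hnonneg hzero hint a hapos N (by linarith)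
    rw [hexp] at this
    calc N - 1 = N * ((N - 1) / N) := by field_simp
    _ ≤ F := this
  have hFMC : M * C ≤ F := by linarith
  -- G ≥ M * (F - C)
  have hsint : ∫ t in s, Real.exp (-a * Ψ t) ≤ C := by
    have h1 : ‖∫ t in s, Real.exp (-a * Ψ t)‖ ≤ 1 * C := by
      apply norm_setIntegral_le_of_norm_le_const hsfin
      · intro x _
        rw [Real.norm_eq_abs, abs_of_nonneg (Real.exp_pos _).le]
        rw [Real.exp_le_one_iff]
        have := hnonneg x
        nlinarith
    calc ∫ t in s, Real.exp (-a * Ψ t) ≤ ‖∫ t in s, Real.exp (-a * Ψ t)‖ :=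
          le_norm_self _
    _ ≤ 1 * C := h1
    _ = C := one_mul _
  have hsplitF : (∫ t in s, Real.exp (-a * Ψ t)) + (∫ t in sᶜ, Real.exp (-a * Ψ t)) = F :=
    integral_add_compl hsm (hint a hapos)
  have hsplitG : (∫ t in s, Ψ t * Real.exp (-a * Ψ t))
      + (∫ t in sᶜ, Ψ t * Real.exp (-a * Ψ t)) = G :=
    integral_add_compl hsm (orlicz_G_int hconv hnonneg hint a hapos)
  have hGs : 0 ≤ ∫ t in s, Ψ t * Real.exp (-a * Ψ t) :=
    setIntegral_nonneg hsm fun t _ => mul_nonneg (hnonneg t) (Real.exp_pos _).le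
  have hGc : M * (∫ t in sᶜ, Real.exp (-a * Ψ t)) ≤ ∫ t in sᶜ, Ψ t * Real.exp (-a * Ψ t) := by
    rw [← integral_const_mul]
    apply setIntegral_mono_on
    · exact ((hint a hapos).const_mul M).integrableOn
    · exact (orlicz_G_int hconv hnonneg hint a hapos).integrableOn
    · exact hsm.compl
    · intro t ht
      have hMt : M ≤ Ψ t := not_lt.1 ht
      exact mul_le_mul_of_nonneg_right hMt (Real.exp_pos _).le
  have hGlow : M * (F - C) ≤ G := by
    have h2 : F - C ≤ ∫ t in sᶜ, Real.exp (-a * Ψ t) := by linarith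
    have h3 : M * (F - C) ≤ M * ∫ t in sᶜ, Real.exp (-a * Ψ t) :=
      mul_le_mul_of_nonneg_left h2 (by linarith)
    linarith
  rw [le_div_iff₀ hFpos]
  have : M * (F - C) = M * F - M * C := by ring
  nlinarith
include hconv hnonneg hzero hint in
lemma orlicz_small (m : ℝ) (hm : 0 < m) : ∃ b : ℝ, 0 < b ∧
    (∫ t, Ψ t * Real.exp (-b * Ψ t)) / (∫ t, Real.exp (-b * Ψ t)) ≤ m := by
  have hmeas : Measurable Ψ := orlicz_meas hconv
  set ε : ℝ := m / 2 with hε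
  have hεpos : 0 < ε := by positivity
  -- small δ with Ψ ≤ ε/2 on [0, δ]
  have hΨ0 : Ψ 0 = 0 := (hzero 0).2 rfl
  have hc : ContinuousAt Ψ 0 := (orlicz_cont hconv).continuousAt
  obtain ⟨δ, hδpos, hδ⟩ := Metric.continuousAt_iff.1 hc (ε/2) (by positivity)
  set d : ℝ := δ / 2 with hd
  have hdpos : 0 < d := by positivity
  have hΨd : Ψ d ≤ ε / 2 := by
    have : dist d 0 < δ := by
      rw [Real.dist_eq, sub_zero, abs_of_pos hdpos]; linarith
    have h2 := hδ this
    rw [Real.dist_eq, hΨ0, sub_zero, abs_of_nonneg (hnonneg d)] at h2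
    linarith
  set K : ℝ := ∫ t, Ψ t * Real.exp (-1 * Ψ t) with hK
  have hK0 : 0 ≤ K := integral_nonneg fun t => mul_nonneg (hnonneg t) (Real.exp_pos _).le
  -- choose b large
  have htend : Tendsto (fun l : ℝ => Real.exp (-(l * (ε/2)))) atTop (nhds 0) := by
    apply Real.tendsto_exp_atBot.comp
    exact tendsto_neg_atBot_iff.2 (Tendsto.atTop_mul_const (by positivity) tendsto_id)
  have hev : ∀ᶠ l : ℝ in atTop,
      Real.exp (-(l * (ε/2))) < ε * d * Real.exp (-ε) / (K + 1) := by
    apply (htend.eventually (eventually_lt_nhds ?_))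
    positivity
  obtain ⟨b, hb1, hb2⟩ := (hev.and (eventually_ge_atTop (1:ℝ))).exists
  have hbpos : 0 < b := lt_of_lt_of_le one_pos hb2
  refine ⟨b, hbpos, ?_⟩
  set F : ℝ := ∫ t, Real.exp (-b * Ψ t) with hF
  set G : ℝ := ∫ t, Ψ t * Real.exp (-b * Ψ t) with hG
  have hFpos : 0 < F := orlicz_F_pos hint b hbpos
  -- lower bound for F
  have hFlow : d * Real.exp (-(b * (ε/2))) ≤ F := by
    calc d * Real.exp (-(b * (ε/2))) ≤ d * Real.exp (-b * Ψ d) := by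
          apply mul_le_mul_of_nonneg_left _ hdpos.le
          apply Real.exp_le_exp.2
          nlinarith
    _ ≤ F := orlicz_F_low hconv hnonneg hzero hint b hbpos d hdpos.le
  -- split G
  set s : Set ℝ := {t | Ψ t ≤ ε} with hs
  have hsm : MeasurableSet s := hmeas measurableSet_Iic
  have hsplitG : (∫ t in s, Ψ t * Real.exp (-b * Ψ t))
      + (∫ t in sᶜ, Ψ t * Real.exp (-b * Ψ t)) = G :=
    integral_add_compl hsm (orlicz_G_int hconv hnonneg hint b hbpos)
  have h_s : (∫ t in s, Ψ t * Real.exp (-b * Ψ t)) ≤ ε * F := by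
    calc (∫ t in s, Ψ t * Real.exp (-b * Ψ t))
        ≤ ∫ t in s, ε * Real.exp (-b * Ψ t) := by
          apply setIntegral_mono_on
          · exact (orlicz_G_int hconv hnonneg hint b hbpos).integrableOn
          · exact ((hint b hbpos).const_mul ε).integrableOn
          · exact hsm
          · intro t ht
            exact mul_le_mul_of_nonneg_right ht (Real.exp_pos _).le
    _ = ε * ∫ t in s, Real.exp (-b * Ψ t) := by rw [integral_const_mul]
    _ ≤ ε * F := by
          apply mul_le_mul_of_nonneg_left _ hεpos.le
          exact setIntegral_le_integral (hint b hbpos)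
            (Eventually.of_forall fun t => (Real.exp_pos _).le)
  have h_sc : (∫ t in sᶜ, Ψ t * Real.exp (-b * Ψ t))
      ≤ Real.exp (-(b-1) * ε) * K := by
    calc (∫ t in sᶜ, Ψ t * Real.exp (-b * Ψ t))
        ≤ ∫ t in sᶜ, Real.exp (-(b-1) * ε) * (Ψ t * Real.exp (-1 * Ψ t)) := by
          apply setIntegral_mono_on
          · exact (orlicz_G_int hconv hnonneg hint b hbpos).integrableOn
          · exact ((orlicz_G_int hconv hnonneg hint 1 one_pos).const_mul _).integrableOn
          · exact hsm.compl
          · intro t ht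
            have hεt : ε < Ψ t := not_le.1 ht
            have e1 : Real.exp (-b * Ψ t)
                = Real.exp (-(b-1) * Ψ t) * Real.exp (-1 * Ψ t) := by
              rw [← Real.exp_add]; ring_nf
            have e2 : Real.exp (-(b-1) * Ψ t) ≤ Real.exp (-(b-1) * ε) := by
              apply Real.exp_le_exp.2
              nlinarith
            calc Ψ t * Real.exp (-b * Ψ t)
                = Real.exp (-(b-1) * Ψ t) * (Ψ t * Real.exp (-1 * Ψ t)) := by
                  rw [e1]; ring
            _ ≤ Real.exp (-(b-1) * ε) * (Ψ t * Real.exp (-1 * Ψ t)) := by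
                  apply mul_le_mul_of_nonneg_right e2
                  exact mul_nonneg (hnonneg t) (Real.exp_pos _).le
    _ = Real.exp (-(b-1) * ε) * ∫ t in sᶜ, Ψ t * Real.exp (-1 * Ψ t) := by
          rw [integral_const_mul]
    _ ≤ Real.exp (-(b-1) * ε) * K := by
          apply mul_le_mul_of_nonneg_left _ (Real.exp_pos _).le
          exact setIntegral_le_integral (orlicz_G_int hconv hnonneg hint 1 one_pos)
            (Eventually.of_forall fun t => mul_nonneg (hnonneg t) (Real.exp_pos _).le)
  -- tail term small
  have htail : Real.exp (-(b-1) * ε) * K ≤ ε * F := by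
    have e1 : Real.exp (-(b-1) * ε)
        = Real.exp ε * (Real.exp (-(b * (ε/2))) * Real.exp (-(b * (ε/2)))) := by
      rw [← Real.exp_add, ← Real.exp_add]; ring_nf
    have e2 : Real.exp (-(b * (ε/2))) * K ≤ Real.exp (-(b * (ε/2))) * (K + 1) := by
      apply mul_le_mul_of_nonneg_left (by linarith) (Real.exp_pos _).le
    have e3 : Real.exp ε * (Real.exp (-(b * (ε/2))) * (K + 1)) ≤ Real.exp ε * (ε * d * Real.exp (-ε)) := by
      apply mul_le_mul_of_nonneg_left _ (Real.exp_pos _).le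
      rw [← le_div_iff₀ (by positivity : (0:ℝ) < K + 1)]
      exact hb1.le
    have e4 : Real.exp ε * (ε * d * Real.exp (-ε)) = ε * d := by
      rw [Real.exp_neg]; field_simp
    calc Real.exp (-(b-1) * ε) * K
        = Real.exp ε * (Real.exp (-(b * (ε/2))) * K) * Real.exp (-(b * (ε/2))) := by
          rw [e1]; ring
    _ ≤ Real.exp ε * (Real.exp (-(b * (ε/2))) * (K + 1)) * Real.exp (-(b * (ε/2))) := by
          apply mul_le_mul_of_nonneg_right _ (Real.exp_pos _).le
          exact mul_le_mul_of_nonneg_left e2 (Real.exp_pos _).le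
    _ ≤ Real.exp ε * (ε * d * Real.exp (-ε)) * Real.exp (-(b * (ε/2))) := by
          apply mul_le_mul_of_nonneg_right e3 (Real.exp_pos _).le
    _ = ε * (d * Real.exp (-(b * (ε/2)))) := by rw [e4]; ring
    _ ≤ ε * F := mul_le_mul_of_nonneg_left hFlow hεpos.le
  rw [div_le_iff₀ hFpos]
  have : m * F = ε * F + ε * F := by rw [hε]; ring
  linarith

-- continuity
include hconv hnonneg hint in
lemma orlicz_R_cont : ContinuousOn
    (fun l => (∫ t, Ψ t * Real.exp (-l * Ψ t)) / (∫ t, Real.exp (-l * Ψ t)))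
    (Set.Ioi 0) := by
  have hmeas : Measurable Ψ := orlicz_meas hconv
  have hFcont : ∀ l₀ : ℝ, 0 < l₀ → ContinuousAt (fun l => ∫ t, Real.exp (-l * Ψ t)) l₀ := by
    intro l₀ hl₀
    apply continuousAt_of_dominated (bound := fun t => Real.exp (-(l₀/2) * Ψ t))
    · exact Eventually.of_forall fun l =>
        ((hmeas.const_mul _).exp).aestronglyMeasurable
    · have hev : ∀ᶠ l : ℝ in nhds l₀, l₀/2 < l :=
        eventually_gt_nhds (by linarith)
      filter_upwards [hev] with l hl
      apply Eventually.of_forall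
      intro t
      rw [Real.norm_eq_abs, abs_of_nonneg (Real.exp_pos _).le]
      apply Real.exp_le_exp.2
      nlinarith [hnonneg t]
    · exact hint (l₀/2) (by positivity)
    · exact Eventually.of_forall fun t => by fun_prop
  have hGcont : ∀ l₀ : ℝ, 0 < l₀ →
      ContinuousAt (fun l => ∫ t, Ψ t * Real.exp (-l * Ψ t)) l₀ := by
    intro l₀ hl₀
    apply continuousAt_of_dominated
      (bound := fun t => (2/(l₀/2)) * Real.exp (-(l₀/4) * Ψ t))
    · exact Eventually.of_forall fun l =>
        (hmeas.mul ((hmeas.const_mul _).exp)).aestronglyMeasurable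
    · have hev : ∀ᶠ l : ℝ in nhds l₀, l₀/2 < l :=
        eventually_gt_nhds (by linarith)
      filter_upwards [hev] with l hl
      apply Eventually.of_forall
      intro t
      have hΨ := hnonneg t
      have h0 : 0 ≤ Ψ t * Real.exp (-l * Ψ t) := by positivity
      rw [Real.norm_eq_abs, abs_of_nonneg h0]
      have step1 : Ψ t * Real.exp (-l * Ψ t) ≤ Ψ t * Real.exp (-(l₀/2) * Ψ t) := by
        apply mul_le_mul_of_nonneg_left _ hΨ
        apply Real.exp_le_exp.2; nlinarith
      have step2 : Ψ t * Real.exp (-(l₀/2) * Ψ t)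
          ≤ (2/(l₀/2)) * Real.exp (-((l₀/2)/2) * Ψ t) := by
        have e2 : ((l₀/2)/2 * Ψ t) * Real.exp (-((l₀/2)/2 * Ψ t)) ≤ 1 := aux_x_exp _
        have e1 : Real.exp (-(l₀/2) * Ψ t)
            = Real.exp (-((l₀/2)/2) * Ψ t) * Real.exp (-((l₀/2)/2) * Ψ t) := by
          rw [← Real.exp_add]; ring_nf
        have e3 : Ψ t * Real.exp (-((l₀/2)/2) * Ψ t) ≤ 2/(l₀/2) := by
          rw [neg_mul]
          calc Ψ t * Real.exp (-((l₀/2)/2 * Ψ t))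
              = (2/(l₀/2)) * (((l₀/2)/2 * Ψ t) * Real.exp (-((l₀/2)/2 * Ψ t))) := by
                field_simp
          _ ≤ (2/(l₀/2)) * 1 := mul_le_mul_of_nonneg_left e2 (by positivity)
          _ = 2/(l₀/2) := mul_one _
        calc Ψ t * Real.exp (-(l₀/2) * Ψ t)
            = (Ψ t * Real.exp (-((l₀/2)/2) * Ψ t)) * Real.exp (-((l₀/2)/2) * Ψ t) := by
              rw [e1]; ring
        _ ≤ (2/(l₀/2)) * Real.exp (-((l₀/2)/2) * Ψ t) :=
              mul_le_mul_of_nonneg_right e3 (Real.exp_pos _).le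
      have : -((l₀/2)/2) = -(l₀/4) := by ring
      rw [this] at step2
      exact step1.trans step2
    · exact ((hint (l₀/4) (by positivity)).const_mul _)
    · exact Eventually.of_forall fun t => by fun_prop
  intro l₀ hl₀
  have hl₀' : 0 < l₀ := hl₀
  apply ContinuousAt.continuousWithinAt
  exact ((hGcont l₀ hl₀').div (hFcont l₀ hl₀')
    (orlicz_F_pos hint l₀ hl₀').ne')
end

theorem orlicz_ratio_surjective
    (Ψ : ℝ → ℝ)
    (hconv : ConvexOn ℝ Set.univ Ψ)
    (hnonneg : ∀ x, 0 ≤ Ψ x)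
    (hzero : ∀ x, Ψ x = 0 ↔ x = 0)
    (hint : ∀ l : ℝ, 0 < l → Integrable (fun t => Real.exp (-l * Ψ t))) :
    ∀ m : ℝ, 0 < m → ∃ l : ℝ, 0 < l ∧
      (∫ t, Ψ t * Real.exp (-l * Ψ t)) / (∫ t, Real.exp (-l * Ψ t)) = m := by
  intro m hm
  obtain ⟨a, hapos, hRa⟩ := orlicz_big hconv hnonneg hzero hint m hm
  obtain ⟨b, hbpos, hRb⟩ := orlicz_small hconv hnonneg hzero hint m hm
  set R : ℝ → ℝ :=
    fun l => (∫ t, Ψ t * Real.exp (-l * Ψ t)) / (∫ t, Real.exp (-l * Ψ t)) with hR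
  have hsub : Set.uIcc a b ⊆ Set.Ioi 0 := fun x hx =>
    lt_of_lt_of_le (lt_min hapos hbpos) hx.1
  have hcontOn : ContinuousOn R (Set.uIcc a b) :=
    (orlicz_R_cont hconv hnonneg hint).mono hsub
  have hmem : m ∈ Set.uIcc (R a) (R b) := Set.mem_uIcc.2 (Or.inr ⟨hRb, hRa⟩)
  obtain ⟨l, hl, hRl⟩ := intermediate_value_uIcc hcontOn hmem
  exact ⟨l, hsub hl, hRl⟩
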